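/- Let γ > 1, d = (γ+1)/(γ−1), and let z, u, m : ℝ × ℝ → ℝ be C² functions of (x,t) with z > 0 and m > 0 everywhere, satisfying ∂_t m = 0, ∂_t z + (c/m)·∂_x u = 0, and ∂_t u + m·c·∂_x z + 2·(p/m)·∂_x m = 0, where c = m·z^d and p = m²·z^{1+d}/(d+1). Define α = ∂_x u + m·∂_x z + (2/(d+1))·(∂_x m)·z and β = ∂_x u − m·∂_x z − (2/(d+1))·(∂_x m)·z. Then everywhere: ∂_t α + c·∂_x α = k₁·( k₂·(3α + β) + α·β − α² ) and ∂_t β − c·∂_x β = k₁·( −k₂·(α + 3β) + α·β − β² ), where k₁ = ((γ+1)/(2(γ−1)))·z^{2/(γ−1)} and k₂ = ((γ−1)/(γ(γ+1)))·z·(∂_x m). -/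

import Mathlib

/-- Partial derivative in the first (spatial, `x`) variable. -/
noncomputable def pdX (f : ℝ × ℝ → ℝ) (q : ℝ × ℝ) : ℝ := fderiv ℝ f q (1, 0)

/-- Partial derivative in the second (temporal, `t`) variable. -/
noncomputable def pdT (f : ℝ × ℝ → ℝ) (q : ℝ × ℝ) : ℝ := fderiv ℝ f q (0, 1)

section Aux

variable {f g : ℝ × ℝ → ℝ} {q v : ℝ × ℝ}

lemma D_add (hf : DifferentiableAt ℝ f q) (hg : DifferentiableAt ℝ g q) :
    fderiv ℝ (fun x => f x + g x) q v = fderiv ℝ f q v + fderiv ℝ g q v := by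
  rw [fderiv_fun_add hf hg]; rfl

lemma D_sub (hf : DifferentiableAt ℝ f q) (hg : DifferentiableAt ℝ g q) :
    fderiv ℝ (fun x => f x - g x) q v = fderiv ℝ f q v - fderiv ℝ g q v := by
  rw [fderiv_fun_sub hf hg]; rfl

lemma D_neg : fderiv ℝ (fun x => -f x) q v = -fderiv ℝ f q v := by
  rw [fderiv_fun_neg]; rfl

lemma D_mul (hf : DifferentiableAt ℝ f q) (hg : DifferentiableAt ℝ g q) :
    fderiv ℝ (fun x => f x * g x) q v = fderiv ℝ f q v * g q + f q * fderiv ℝ g q v := by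
  rw [fderiv_fun_mul hf hg]; simp; ring

lemma D_const_mul (a : ℝ) (hf : DifferentiableAt ℝ f q) :
    fderiv ℝ (fun x => a * f x) q v = a * fderiv ℝ f q v := by
  rw [fderiv_const_mul hf]; rfl

lemma D_rpow (hf : DifferentiableAt ℝ f q) (h : f q ≠ 0) (p : ℝ) :
    fderiv ℝ (fun x => f x ^ p) q v = p * f q ^ (p - 1) * fderiv ℝ f q v := by
  rw [(hf.hasFDerivAt.rpow_const (Or.inl h)).fderiv]
  simp [mul_assoc]

lemma diff_pdX (hf : ContDiff ℝ 2 f) : Differentiable ℝ (pdX f) :=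
  ((hf.fderiv_right (le_refl _)).clm_apply contDiff_const).differentiable one_ne_zero

lemma pd_apply_eq (hf : ContDiff ℝ 2 f) (q v w : ℝ × ℝ) :
    fderiv ℝ (fun x => fderiv ℝ f x v) q w = fderiv ℝ (fderiv ℝ f) q w v := by
  rw [fderiv_clm_apply ((hf.fderiv_right (le_refl _)).differentiable one_ne_zero q)
    (differentiableAt_const v)]
  simp

lemma pd_comm (hf : ContDiff ℝ 2 f) (q : ℝ × ℝ) :
    pdT (pdX f) q = pdX (pdT f) q := by
  have hsym := (hf.contDiffAt (x := q)).isSymmSndFDerivAt (by simp)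
  show fderiv ℝ (fun x => fderiv ℝ f x (1,0)) q (0,1)
      = fderiv ℝ (fun x => fderiv ℝ f x (0,1)) q (1,0)
  rw [pd_apply_eq hf, pd_apply_eq hf, hsym]

end Aux

set_option maxHeartbeats 2000000

/-- The Riccati-type equations for the gradient variables `α` and `β` of `C²` solutions
of the compressible Euler equations in Lagrangian coordinates. -/
theorem riccati_equations (γ : ℝ) (hγ : 1 < γ) (d : ℝ) (hd : d = (γ + 1) / (γ - 1))
    (z u m : ℝ × ℝ → ℝ)
    (hz2 : ContDiff ℝ 2 z) (hu2 : ContDiff ℝ 2 u) (hm2 : ContDiff ℝ 2 m)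
    (hzpos : ∀ q, 0 < z q) (hmpos : ∀ q, 0 < m q)
    (c p : ℝ × ℝ → ℝ)
    (hc : ∀ q, c q = m q * z q ^ d)
    (hp : ∀ q, p q = (m q) ^ 2 * z q ^ (1 + d) / (d + 1))
    (hmt : ∀ q, pdT m q = 0)
    (heq1 : ∀ q, pdT z q + (c q / m q) * pdX u q = 0)
    (heq2 : ∀ q, pdT u q + m q * c q * pdX z q + 2 * (p q / m q) * pdX m q = 0)
    (α β k₁ k₂ : ℝ × ℝ → ℝ)
    (hα : ∀ q, α q = pdX u q + m q * pdX z q + (2 / (d + 1)) * pdX m q * z q)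
    (hβ : ∀ q, β q = pdX u q - m q * pdX z q - (2 / (d + 1)) * pdX m q * z q)
    (hk₁ : ∀ q, k₁ q = ((γ + 1) / (2 * (γ - 1))) * z q ^ (2 / (γ - 1)))
    (hk₂ : ∀ q, k₂ q = ((γ - 1) / (γ * (γ + 1))) * z q * pdX m q) :
    ∀ q, pdT α q + c q * pdX α q
          = k₁ q * (k₂ q * (3 * α q + β q) + α q * β q - (α q) ^ 2)
      ∧ pdT β q - c q * pdX β q
          = k₁ q * (-(k₂ q) * (α q + 3 * β q) + α q * β q - (β q) ^ 2) := by
  have hγ1 : (0:ℝ) < γ - 1 := by linarith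
  have hd1 : 1 < d := by rw [hd, lt_div_iff₀ hγ1]; linarith
  have hdne : d ≠ 0 := by linarith
  have hdp1 : d + 1 ≠ 0 := by linarith
  have hzne : ∀ x, z x ≠ 0 := fun x => (hzpos x).ne'
  have hmne : ∀ x, m x ≠ 0 := fun x => (hmpos x).ne'
  -- differentiability
  have dz : ∀ x, DifferentiableAt ℝ z x := fun x => hz2.differentiable two_ne_zero x
  have du : ∀ x, DifferentiableAt ℝ u x := fun x => hu2.differentiable two_ne_zero x
  have dm : ∀ x, DifferentiableAt ℝ m x := fun x => hm2.differentiable two_ne_zero x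
  have dzx : ∀ x, DifferentiableAt ℝ (pdX z) x := fun x => diff_pdX hz2 x
  have dux : ∀ x, DifferentiableAt ℝ (pdX u) x := fun x => diff_pdX hu2 x
  have dmx : ∀ x, DifferentiableAt ℝ (pdX m) x := fun x => diff_pdX hm2 x
  have dzd : ∀ x, DifferentiableAt ℝ (fun y => z y ^ d) x :=
    fun x => (dz x).rpow_const (Or.inl (hzne x))
  have dz1d : ∀ x, DifferentiableAt ℝ (fun y => z y ^ (1 + d)) x :=
    fun x => (dz x).rpow_const (Or.inl (hzne x))
  -- the PDE in explicit form
  have hzt : ∀ x, pdT z x = -(z x ^ d * pdX u x) := by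
    intro x
    have h := heq1 x
    have h2 : c x / m x = z x ^ d := by
      rw [hc x]; exact mul_div_cancel_left₀ _ (hmne x)
    rw [h2] at h; linarith
  have hut : ∀ x, pdT u x
      = -(m x * m x * (z x ^ d * pdX z x)) - 2 / (d + 1) * (m x * (z x ^ (1 + d) * pdX m x)) := by
    intro x
    have h := heq2 x
    have h1 : m x * c x = m x * m x * z x ^ d := by rw [hc x]; ring
    have h2 : 2 * (p x / m x) = 2 / (d + 1) * (m x * z x ^ (1 + d)) := by
      rw [hp x]; field_simp [hmne x]
    rw [h1, h2] at h
    linear_combination h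
  have hztf : pdT z = fun x => -(z x ^ d * pdX u x) := funext hzt
  have hutf : pdT u = fun x =>
      -(m x * m x * (z x ^ d * pdX z x)) - 2 / (d + 1) * (m x * (z x ^ (1 + d) * pdX m x)) :=
    funext hut
  have hmtf : pdT m = fun _ => (0:ℝ) := funext hmt
  have hαf : α = fun x => pdX u x + m x * pdX z x + 2 / (d + 1) * pdX m x * z x := funext hα
  have hβf : β = fun x => pdX u x - m x * pdX z x - 2 / (d + 1) * pdX m x * z x := funext hβ
  intro q
  -- mixed second derivatives
  have B1 : pdT (pdX m) q = 0 := by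
    rw [pd_comm hm2 q, hmtf]
    simp [pdX]
  have B2 : pdT (pdX z) q
      = -(d * z q ^ (d - 1) * pdX z q * pdX u q + z q ^ d * pdX (pdX u) q) := by
    rw [pd_comm hz2 q, hztf]
    show fderiv ℝ (fun x => -(z x ^ d * pdX u x)) q (1,0) = _
    rw [D_neg, D_mul (dzd q) (dux q), D_rpow (dz q) (hzne q) d]
    simp only [pdX]
  have B3 : pdT (pdX u) q
      = -((pdX m q * m q + m q * pdX m q) * (z q ^ d * pdX z q)
            + m q * m q * ((d * z q ^ (d - 1) * pdX z q) * pdX z q + z q ^ d * pdX (pdX z) q))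
        - 2 / (d + 1) * (pdX m q * (z q ^ (1 + d) * pdX m q)
            + m q * (((1 + d) * z q ^ (1 + d - 1) * pdX z q) * pdX m q
              + z q ^ (1 + d) * pdX (pdX m) q)) := by
    rw [pd_comm hu2 q, hutf]
    show fderiv ℝ (fun x =>
      -(m x * m x * (z x ^ d * pdX z x)) - 2 / (d + 1) * (m x * (z x ^ (1 + d) * pdX m x)))
        q (1,0) = _
    rw [D_sub ((((dm q).fun_mul (dm q)).fun_mul ((dzd q).fun_mul (dzx q))).fun_neg)
          (((dm q).fun_mul ((dz1d q).fun_mul (dmx q))).const_mul _),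
        D_neg, D_mul ((dm q).fun_mul (dm q)) ((dzd q).fun_mul (dzx q)),
        D_mul (dm q) (dm q), D_mul (dzd q) (dzx q), D_rpow (dz q) (hzne q) d,
        D_const_mul _ ((dm q).fun_mul ((dz1d q).fun_mul (dmx q))),
        D_mul (dm q) ((dz1d q).fun_mul (dmx q)), D_mul (dz1d q) (dmx q),
        D_rpow (dz q) (hzne q) (1 + d)]
    simp only [pdX]
  -- time derivatives of α, β
  have hTα : pdT α q
      = pdT (pdX u) q + (pdT m q * pdX z q + m q * pdT (pdX z) q)
        + (2 / (d + 1) * pdT (pdX m) q * z q + 2 / (d + 1) * pdX m q * pdT z q) := by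
    show fderiv ℝ α q (0,1) = _
    rw [hαf,
        D_add ((dux q).fun_add ((dm q).fun_mul (dzx q))) (((dmx q).const_mul _).fun_mul (dz q)),
        D_add (dux q) ((dm q).fun_mul (dzx q)),
        D_mul (dm q) (dzx q),
        D_mul ((dmx q).const_mul _) (dz q),
        D_const_mul _ (dmx q)]
    simp only [pdX, pdT]
  have hTβ : pdT β q
      = pdT (pdX u) q - (pdT m q * pdX z q + m q * pdT (pdX z) q)
        - (2 / (d + 1) * pdT (pdX m) q * z q + 2 / (d + 1) * pdX m q * pdT z q) := by
    show fderiv ℝ β q (0,1) = _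
    rw [hβf,
        D_sub ((dux q).fun_sub ((dm q).fun_mul (dzx q))) (((dmx q).const_mul _).fun_mul (dz q)),
        D_sub (dux q) ((dm q).fun_mul (dzx q)),
        D_mul (dm q) (dzx q),
        D_mul ((dmx q).const_mul _) (dz q),
        D_const_mul _ (dmx q)]
    simp only [pdX, pdT]
  -- space derivatives of α, β
  have hXα : pdX α q
      = pdX (pdX u) q + (pdX m q * pdX z q + m q * pdX (pdX z) q)
        + (2 / (d + 1) * pdX (pdX m) q * z q + 2 / (d + 1) * pdX m q * pdX z q) := by
    show fderiv ℝ α q (1,0) = _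
    rw [hαf,
        D_add ((dux q).fun_add ((dm q).fun_mul (dzx q))) (((dmx q).const_mul _).fun_mul (dz q)),
        D_add (dux q) ((dm q).fun_mul (dzx q)),
        D_mul (dm q) (dzx q),
        D_mul ((dmx q).const_mul _) (dz q),
        D_const_mul _ (dmx q)]
    simp only [pdX]
  have hXβ : pdX β q
      = pdX (pdX u) q - (pdX m q * pdX z q + m q * pdX (pdX z) q)
        - (2 / (d + 1) * pdX (pdX m) q * z q + 2 / (d + 1) * pdX m q * pdX z q) := by
    show fderiv ℝ β q (1,0) = _
    rw [hβf,
        D_sub ((dux q).fun_sub ((dm q).fun_mul (dzx q))) (((dmx q).const_mul _).fun_mul (dz q)),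
        D_sub (dux q) ((dm q).fun_mul (dzx q)),
        D_mul (dm q) (dzx q),
        D_mul ((dmx q).const_mul _) (dz q),
        D_const_mul _ (dmx q)]
    simp only [pdX]
  -- coefficient and rpow conversions
  have e1 : 2 / (γ - 1) = d - 1 := by rw [hd]; field_simp; norm_num
  have cA : (γ + 1) / (2 * (γ - 1)) = d / 2 := by rw [hd, div_div, mul_comm (γ - 1) 2]
  have cB : (γ - 1) / (γ * (γ + 1)) = (d - 1) / (d * (d + 1)) := by
    have hγ0 : γ ≠ 0 := by linarith
    have hγp1 : γ + 1 ≠ 0 := by linarith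
    rw [hd]; field_simp [hγ1.ne', hγ0, hγp1]; ring
  have e2 : z q ^ d = z q ^ (d - 1) * z q := by
    have h := Real.rpow_add_one (hzne q) (d - 1)
    rw [show d - 1 + 1 = d by ring] at h
    exact h
  have e3 : z q ^ (1 + d) = z q * (z q ^ (d - 1) * z q) := by
    have h := Real.rpow_add (hzpos q) 1 d
    rw [Real.rpow_one, e2] at h
    exact h
  constructor
  · rw [hTα, hXα, B1, B2, B3, hmt q, hzt q, hc q, hk₁ q, hk₂ q, hα q, hβ q,
        show (1:ℝ) + d - 1 = d by ring, e1, cA, cB, e3, e2]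
    generalize z q ^ (d - 1) = W
    field_simp
    ring
  · rw [hTβ, hXβ, B1, B2, B3, hmt q, hzt q, hc q, hk₁ q, hk₂ q, hα q, hβ q,
        show (1:ℝ) + d - 1 = d by ring, e1, cA, cB, e3, e2]
    generalize z q ^ (d - 1) = W
    field_simp
    ring
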